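/- Suppose f and h both satisfy (G1) and (G3), fix H with ‖H‖_{2,col} ≤ B, and let Θ = (θ_{l,j}, w_{l,j}) be parameters with √(‖θ_{l,j}‖²+‖w_{l,j}‖²) ≤ r for all l, j. Let T̂_Θ be the two-half-step discrete Transformer and let T̄_Θ be the merged one-step scheme: T̄(0) = H, T̄(t_{l+1}) = T̄(t_l) + (Δt/(2M))∑_{j=1}^{M}(f(T̄(t_l),θ_{l,j}) + h(T̄(t_l),w_{l,j})), with Δt = 1/L. Then there is a constant C, depending only on N, D, r, B and the constants in (G1), (G3), such that ‖T̂_Θ(H,t_l) − T̄_Θ(H,t_l)‖_{2,col} ≤ C/L for every grid point t_l ∈ {0, 1/L, …, 1}. -/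

import Mathlib

open MeasureTheory Set

noncomputable section

set_option maxHeartbeats 1000000

/-- `D × (N+1)` real matrices, with the Frobenius (Euclidean) norm. -/
abbrev Mat (D N : ℕ) : Type := EuclideanSpace ℝ (Fin D × Fin (N + 1))

/-- Parameter space `ℝ^p` with the Euclidean norm. -/
abbrev Par (p : ℕ) : Type := EuclideanSpace ℝ (Fin p)

/-- The `j`-th column of a matrix, as a Euclidean vector. -/
noncomputable def matCol {D N : ℕ} (Z : Mat D N) (j : Fin (N + 1)) :
    EuclideanSpace ℝ (Fin D) :=
  (WithLp.equiv 2 (Fin D → ℝ)).symm fun i => Z (i, j)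

/-- Maximum ℓ²-norm of a column: `‖Z‖_{2,col}`. -/
noncomputable def colNorm {D N : ℕ} (Z : Mat D N) : ℝ :=
  ⨆ j : Fin (N + 1), ‖matCol Z j‖

/-- The discrete Transformer: `T̂(t_{l+1})` is obtained from `T̂(t_l)` by one self-attention
half-step with encoder `f` followed by one feed-forward half-step with encoder `h`,
with step size `Δt/2 = 1/(2L)` and `M` heads. -/
noncomputable def Tdis {D N q : ℕ} (f h : Mat D N → Par q → Mat D N) (L M : ℕ)
    (θ w : ℕ → Fin M → Par q) (H : Mat D N) : ℕ → Mat D N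
  | 0 => H
  | l + 1 =>
    let T := Tdis f h L M θ w H l
    let T' := T + (2 * (L : ℝ) * (M : ℝ))⁻¹ • ∑ j : Fin M, f T (θ l j)
    T' + (2 * (L : ℝ) * (M : ℝ))⁻¹ • ∑ j : Fin M, h T' (w l j)

/-- The discrete Transformer at the half grid point `t_l + Δt/2`. -/
noncomputable def TdisHalf {D N q : ℕ} (f h : Mat D N → Par q → Mat D N) (L M : ℕ)
    (θ w : ℕ → Fin M → Par q) (H : Mat D N) (l : ℕ) : Mat D N :=
  Tdis f h L M θ w H l +
    (2 * (L : ℝ) * (M : ℝ))⁻¹ • ∑ j : Fin M, f (Tdis f h L M θ w H l) (θ l j)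

/-- The merged one-step scheme, averaging the two encoders in a single residual step. -/
noncomputable def Tbar {D N q : ℕ} (f h : Mat D N → Par q → Mat D N) (L M : ℕ)
    (θ w : ℕ → Fin M → Par q) (H : Mat D N) : ℕ → Mat D N
  | 0 => H
  | l + 1 =>
    Tbar f h L M θ w H l +
      (2 * (L : ℝ) * (M : ℝ))⁻¹ •
        ∑ j : Fin M, (f (Tbar f h L M θ w H l) (θ l j) + h (Tbar f h L M θ w H l) (w l j))

lemma colNorm_le_norm {D N : ℕ} (Z : Mat D N) : colNorm Z ≤ ‖Z‖ := by
  apply ciSup_le (f := fun j => ‖matCol Z j‖)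
  intro j
  rw [EuclideanSpace.norm_eq, EuclideanSpace.norm_eq]
  apply Real.sqrt_le_sqrt
  have : ∀ i : Fin D, ‖matCol Z j i‖ = ‖Z (i, j)‖ := fun i => rfl
  simp only [this]
  rw [Fintype.sum_prod_type]
  apply Finset.sum_le_sum
  intro i _
  exact Finset.single_le_sum (f := fun j' => ‖Z (i, j')‖ ^ 2)
    (fun _ _ => by positivity) (Finset.mem_univ j)

lemma le_colNorm {D N : ℕ} (Z : Mat D N) (j : Fin (N + 1)) : ‖matCol Z j‖ ≤ colNorm Z :=
  le_ciSup (f := fun j => ‖matCol Z j‖) (Set.Finite.bddAbove (Set.finite_range _)) j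

lemma colNorm_nonneg {D N : ℕ} (Z : Mat D N) : 0 ≤ colNorm Z :=
  le_trans (norm_nonneg (matCol Z 0)) (le_colNorm Z 0)

lemma norm_le_sqrt_colNorm {D N : ℕ} (Z : Mat D N) :
    ‖Z‖ ≤ Real.sqrt (N + 1) * colNorm Z := by
  have hcol : ∀ j, ‖matCol Z j‖ ≤ colNorm Z := le_colNorm Z
  rw [EuclideanSpace.norm_eq]
  have : (∑ p : Fin D × Fin (N + 1), ‖Z p‖ ^ 2) ≤ (N + 1) * colNorm Z ^ 2 := by
    rw [Fintype.sum_prod_type, Finset.sum_comm]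
    have hj : ∀ j : Fin (N + 1), (∑ i : Fin D, ‖Z (i, j)‖ ^ 2) ≤ colNorm Z ^ 2 := by
      intro j
      have h1 : ‖matCol Z j‖ ^ 2 = ∑ i : Fin D, ‖Z (i, j)‖ ^ 2 := by
        rw [EuclideanSpace.norm_eq, Real.sq_sqrt (by positivity)]
        rfl
      rw [← h1]
      exact pow_le_pow_left₀ (norm_nonneg _) (hcol j) 2
    calc (∑ j : Fin (N + 1), ∑ i : Fin D, ‖Z (i, j)‖ ^ 2)
        ≤ ∑ _j : Fin (N + 1), colNorm Z ^ 2 := Finset.sum_le_sum fun j _ => hj j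
      _ = (N + 1) * colNorm Z ^ 2 := by simp [Finset.sum_const, nsmul_eq_mul]
  calc Real.sqrt (∑ p : Fin D × Fin (N + 1), ‖Z p‖ ^ 2)
      ≤ Real.sqrt ((N + 1) * colNorm Z ^ 2) := Real.sqrt_le_sqrt this
    _ = Real.sqrt (N + 1) * colNorm Z := by
        rw [Real.sqrt_mul (by positivity), Real.sqrt_sq (colNorm_nonneg Z)]

lemma lip_bound {D N : ℕ} (g : Mat D N → Mat D N) (c Bm : ℝ)
    (hdiff : Differentiable ℝ g)
    (hbd : ∀ x : Mat D N, ‖x‖ ≤ Bm → ‖fderiv ℝ g x‖ ≤ c)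
    {T1 T2 : Mat D N} (h1 : ‖T1‖ ≤ Bm) (h2 : ‖T2‖ ≤ Bm) :
    ‖g T1 - g T2‖ ≤ c * ‖T1 - T2‖ := by
  exact (convex_closedBall (0 : Mat D N) Bm).norm_image_sub_le_of_norm_fderiv_le
    (fun x _ => hdiff x)
    (fun x hx => hbd x (by simpa [Metric.mem_closedBall, dist_zero_right] using hx))
    (by simpa [Metric.mem_closedBall, dist_zero_right] using h2)
    (by simpa [Metric.mem_closedBall, dist_zero_right] using h1)

lemma sum_smul_bound {E : Type*} [NormedAddCommGroup E] [NormedSpace ℝ E]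
    (L M : ℕ) (hL : 0 < L) (hM : 0 < M) (v : Fin M → E) (c : ℝ)
    (hv : ∀ j, ‖v j‖ ≤ c) :
    ‖(2 * (L : ℝ) * (M : ℝ))⁻¹ • ∑ j : Fin M, v j‖ ≤ c / (2 * L) := by
  have hMc : 0 ≤ c := le_trans (norm_nonneg _) (hv ⟨0, hM⟩)
  have h1 : ‖∑ j : Fin M, v j‖ ≤ M * c := by
    calc ‖∑ j : Fin M, v j‖ ≤ ∑ j : Fin M, ‖v j‖ := norm_sum_le _ _
      _ ≤ ∑ _j : Fin M, c := Finset.sum_le_sum fun j _ => hv j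
      _ = M * c := by simp [Finset.sum_const, mul_comm]
  rw [norm_smul]
  have habs : ‖(2 * (L : ℝ) * (M : ℝ))⁻¹‖ = (2 * (L : ℝ) * (M : ℝ))⁻¹ := by
    rw [Real.norm_eq_abs, abs_of_nonneg]; positivity
  rw [habs, div_eq_mul_inv]
  calc (2 * (L : ℝ) * (M : ℝ))⁻¹ * ‖∑ j : Fin M, v j‖
      ≤ (2 * (L : ℝ) * (M : ℝ))⁻¹ * (M * c) := by
        apply mul_le_mul_of_nonneg_left h1; positivity
    _ = c * (2 * (L : ℝ))⁻¹ := by field_simp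

/-- the two-half-step discrete Transformer and the merged one-step scheme differ
by at most `C / L` in column norm at every grid point. -/
theorem stmt13 (D N q : ℕ) (f h : Mat D N → Par q → Mat D N)
    (B K r : ℝ) (φT : ℝ → ℝ)
    (hB : 0 < B) (hK : 0 < K) (hr : 0 < r)
    (hφT : Continuous φT ∧ Monotone φT)
    (hfdiffT : ∀ θ : Par q, Differentiable ℝ fun T : Mat D N => f T θ)
    (hhdiffT : ∀ w : Par q, Differentiable ℝ fun T : Mat D N => h T w)
    (hG1f : ∀ (T : Mat D N) (θ : Par q),
      colNorm (f T θ) ≤ K * colNorm T * (1 + ‖θ‖ + ‖θ‖ ^ 2))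
    (hG3f : ∀ (T : Mat D N) (θ : Par q),
      ‖fderiv ℝ (fun T' => f T' θ) T‖ ≤ φT ‖T‖ * (1 + ‖θ‖ + ‖θ‖ ^ 2))
    (hG1h : ∀ (T : Mat D N) (w : Par q),
      colNorm (h T w) ≤ K * colNorm T * (1 + ‖w‖ + ‖w‖ ^ 2))
    (hG3h : ∀ (T : Mat D N) (w : Par q),
      ‖fderiv ℝ (fun T' => h T' w) T‖ ≤ φT ‖T‖ * (1 + ‖w‖ + ‖w‖ ^ 2)) :
    ∃ C : ℝ, 0 < C ∧ ∀ (L M : ℕ), 0 < L → 0 < M →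
      ∀ θ w : ℕ → Fin M → Par q,
        (∀ l < L, ∀ j : Fin M, Real.sqrt (‖θ l j‖ ^ 2 + ‖w l j‖ ^ 2) ≤ r) →
        ∀ H : Mat D N, colNorm H ≤ B →
          ∀ l ≤ L,
            colNorm (Tdis f h L M θ w H l - Tbar f h L M θ w H l) ≤ C / L := by
  obtain ⟨hφc, hφm⟩ := hφT
  have hcN : (0:ℝ) < Real.sqrt (N + 1) := Real.sqrt_pos.2 (by positivity)
  set R : ℝ := 1 + r + r ^ 2 with hRdef
  have hRpos : 0 < R := by positivity
  set K' : ℝ := Real.sqrt (N + 1) * K * R with hK'def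
  have hK' : 0 < K' := by positivity
  set Bm : ℝ := Real.sqrt (N + 1) * B * Real.exp (2 * K') with hBmdef
  have hBm : 0 < Bm := by positivity
  have hφ0 : 0 ≤ φT 0 := by
    have h1 := hG3f 0 0
    have h2 := norm_nonneg (fderiv ℝ (fun T' => f T' (0 : Par q)) 0)
    simp only [norm_zero] at h1
    nlinarith
  have hφBm : 0 ≤ φT Bm := le_trans hφ0 (hφm hBm.le)
  set Lip : ℝ := φT Bm * R with hLipdef
  have hLip : 0 ≤ Lip := mul_nonneg hφBm hRpos.le
  set d : ℝ := Lip * K' * Bm / 4 with hddef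
  have hd : 0 ≤ d := by positivity
  refine ⟨d * Real.exp Lip + 1, by positivity, ?_⟩
  intro L M hL hM θ w hΘ H hH
  have hL1 : (1:ℝ) ≤ L := by exact_mod_cast hL
  have hLpos : (0:ℝ) < L := by positivity
  -- parameter norms are bounded by r
  have hpar : ∀ l < L, ∀ j : Fin M, ‖θ l j‖ ≤ r ∧ ‖w l j‖ ≤ r := by
    intro l hl j
    have hsq := hΘ l hl j
    constructor
    · have h0 : ‖θ l j‖ = Real.sqrt (‖θ l j‖ ^ 2) := (Real.sqrt_sq (norm_nonneg _)).symm
      rw [h0]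
      exact le_trans (Real.sqrt_le_sqrt (by nlinarith [sq_nonneg ‖w l j‖])) hsq
    · have h0 : ‖w l j‖ = Real.sqrt (‖w l j‖ ^ 2) := (Real.sqrt_sq (norm_nonneg _)).symm
      rw [h0]
      exact le_trans (Real.sqrt_le_sqrt (by nlinarith [sq_nonneg ‖θ l j‖])) hsq
  have hRθ : ∀ l < L, ∀ j : Fin M, 1 + ‖θ l j‖ + ‖θ l j‖ ^ 2 ≤ R := by
    intro l hl j
    have := (hpar l hl j).1
    have hn := norm_nonneg (θ l j)
    rw [hRdef]; nlinarith
  have hRw : ∀ l < L, ∀ j : Fin M, 1 + ‖w l j‖ + ‖w l j‖ ^ 2 ≤ R := by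
    intro l hl j
    have := (hpar l hl j).2
    have hn := norm_nonneg (w l j)
    rw [hRdef]; nlinarith
  -- norm bounds on f and h
  have hG1' : ∀ (g : Mat D N → Par q → Mat D N),
      (∀ (T : Mat D N) (p : Par q), colNorm (g T p) ≤ K * colNorm T * (1 + ‖p‖ + ‖p‖ ^ 2)) →
      ∀ (T : Mat D N) (p : Par q), 1 + ‖p‖ + ‖p‖ ^ 2 ≤ R → ‖g T p‖ ≤ K' * ‖T‖ := by
    intro g hg T p hp
    calc ‖g T p‖ ≤ Real.sqrt (N + 1) * colNorm (g T p) := norm_le_sqrt_colNorm _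
      _ ≤ Real.sqrt (N + 1) * (K * colNorm T * (1 + ‖p‖ + ‖p‖ ^ 2)) :=
          mul_le_mul_of_nonneg_left (hg T p) hcN.le
      _ ≤ Real.sqrt (N + 1) * (K * ‖T‖ * R) := by
          apply mul_le_mul_of_nonneg_left _ hcN.le
          apply mul_le_mul (mul_le_mul_of_nonneg_left (colNorm_le_norm T) hK.le) hp
            (by positivity) (by positivity)
      _ = K' * ‖T‖ := by rw [hK'def]; ring
  have hfb : ∀ l < L, ∀ (j : Fin M) (T : Mat D N), ‖f T (θ l j)‖ ≤ K' * ‖T‖ :=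
    fun l hl j T => hG1' f hG1f T (θ l j) (hRθ l hl j)
  have hhb : ∀ l < L, ∀ (j : Fin M) (T : Mat D N), ‖h T (w l j)‖ ≤ K' * ‖T‖ :=
    fun l hl j T => hG1' h hG1h T (w l j) (hRw l hl j)
  -- Lipschitz bounds on the ball of radius Bm
  have hlipf : ∀ l < L, ∀ (j : Fin M) (T1 T2 : Mat D N), ‖T1‖ ≤ Bm → ‖T2‖ ≤ Bm →
      ‖f T1 (θ l j) - f T2 (θ l j)‖ ≤ Lip * ‖T1 - T2‖ := by
    intro l hl j T1 T2 h1 h2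
    apply lip_bound _ _ Bm (hfdiffT (θ l j)) _ h1 h2
    intro x hx
    calc ‖fderiv ℝ (fun T' => f T' (θ l j)) x‖ ≤ φT ‖x‖ * (1 + ‖θ l j‖ + ‖θ l j‖ ^ 2) :=
          hG3f x (θ l j)
      _ ≤ φT Bm * R := mul_le_mul (hφm hx) (hRθ l hl j) (by positivity) hφBm
  have hliph : ∀ l < L, ∀ (j : Fin M) (T1 T2 : Mat D N), ‖T1‖ ≤ Bm → ‖T2‖ ≤ Bm →
      ‖h T1 (w l j) - h T2 (w l j)‖ ≤ Lip * ‖T1 - T2‖ := by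
    intro l hl j T1 T2 h1 h2
    apply lip_bound _ _ Bm (hhdiffT (w l j)) _ h1 h2
    intro x hx
    calc ‖fderiv ℝ (fun T' => h T' (w l j)) x‖ ≤ φT ‖x‖ * (1 + ‖w l j‖ + ‖w l j‖ ^ 2) :=
          hG3h x (w l j)
      _ ≤ φT Bm * R := mul_le_mul (hφm hx) (hRw l hl j) (by positivity) hφBm
  have hHn : ‖H‖ ≤ Real.sqrt (N + 1) * B :=
    le_trans (norm_le_sqrt_colNorm H) (mul_le_mul_of_nonneg_left hH hcN.le)
  -- one residual half-step grows the norm by at most exp (K'/(2L))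
  have step : ∀ (T : Mat D N) (v : Fin M → Mat D N) (c : ℝ), 0 ≤ c → ‖T‖ ≤ c →
      (∀ j, ‖v j‖ ≤ K' * ‖T‖) →
      ‖T + (2 * (L : ℝ) * (M : ℝ))⁻¹ • ∑ j : Fin M, v j‖ ≤ c * Real.exp (K' / (2 * L)) := by
    intro T v c hc hT hv
    have h1 : ‖T + (2 * (L : ℝ) * (M : ℝ))⁻¹ • ∑ j : Fin M, v j‖
        ≤ ‖T‖ + (K' * ‖T‖) / (2 * L) :=
      le_trans (norm_add_le _ _)
        (add_le_add_right (sum_smul_bound L M hL hM v (K' * ‖T‖) hv) _)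
    have he := Real.add_one_le_exp (K' / (2 * L))
    have h2 : ‖T‖ + (K' * ‖T‖) / (2 * L) ≤ c * (1 + K' / (2 * L)) := by
      have h2' : ‖T‖ * (1 + K' / (2 * L)) ≤ c * (1 + K' / (2 * L)) :=
        mul_le_mul_of_nonneg_right hT (by positivity)
      calc ‖T‖ + (K' * ‖T‖) / (2 * L) = ‖T‖ * (1 + K' / (2 * L)) := by ring
        _ ≤ c * (1 + K' / (2 * L)) := h2'
    have h3 : c * (1 + K' / (2 * L)) ≤ c * Real.exp (K' / (2 * L)) :=
      mul_le_mul_of_nonneg_left (by linarith) hc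
    linarith
  -- growth bound for both schemes
  have grow : ∀ l ≤ L, ‖Tdis f h L M θ w H l‖ ≤
        Real.sqrt (N + 1) * B * Real.exp (K' * l / L) ∧
      ‖Tbar f h L M θ w H l‖ ≤ Real.sqrt (N + 1) * B * Real.exp (K' * l / L) := by
    intro l
    induction l with
    | zero =>
      intro _
      simp only [Tdis, Tbar, Nat.cast_zero, mul_zero, zero_div, Real.exp_zero, mul_one]
      exact ⟨hHn, hHn⟩
    | succ l ih =>
      intro hl1
      have hl : l < L := hl1
      obtain ⟨ih1, ih2⟩ := ih hl.le
      have hexp : (0:ℝ) < Real.sqrt (N + 1) * B * Real.exp (K' * l / L) := by positivity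
      constructor
      · show ‖(Tdis f h L M θ w H l + (2 * (L : ℝ) * (M : ℝ))⁻¹ • ∑ j : Fin M,
            f (Tdis f h L M θ w H l) (θ l j)) + (2 * (L : ℝ) * (M : ℝ))⁻¹ • ∑ j : Fin M,
            h (Tdis f h L M θ w H l + (2 * (L : ℝ) * (M : ℝ))⁻¹ • ∑ j : Fin M,
              f (Tdis f h L M θ w H l) (θ l j)) (w l j)‖ ≤ _
        have s1 := step (Tdis f h L M θ w H l) (fun j => f (Tdis f h L M θ w H l) (θ l j))
          (Real.sqrt (N + 1) * B * Real.exp (K' * l / L)) hexp.le ih1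
          (fun j => hfb l hl j _)
        have s2 := step _ (fun j => h (Tdis f h L M θ w H l +
            (2 * (L : ℝ) * (M : ℝ))⁻¹ • ∑ j : Fin M, f (Tdis f h L M θ w H l) (θ l j)) (w l j))
          (Real.sqrt (N + 1) * B * Real.exp (K' * l / L) * Real.exp (K' / (2 * L)))
          (by positivity) s1 (fun j => hhb l hl j _)
        refine le_trans s2 (le_of_eq ?_)
        have harg : K' * ((l : ℝ) + 1) / L = K' * l / L + K' / (2 * L) + K' / (2 * L) := by
          field_simp
          ring
        push_cast
        rw [harg, Real.exp_add, Real.exp_add]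
        ring
      · show ‖Tbar f h L M θ w H l + (2 * (L : ℝ) * (M : ℝ))⁻¹ • ∑ j : Fin M,
            (f (Tbar f h L M θ w H l) (θ l j) + h (Tbar f h L M θ w H l) (w l j))‖ ≤ _
        have h1 : ‖Tbar f h L M θ w H l + (2 * (L : ℝ) * (M : ℝ))⁻¹ • ∑ j : Fin M,
            (f (Tbar f h L M θ w H l) (θ l j) + h (Tbar f h L M θ w H l) (w l j))‖
            ≤ ‖Tbar f h L M θ w H l‖ + (2 * K' * ‖Tbar f h L M θ w H l‖) / (2 * L) := by
          refine le_trans (norm_add_le _ _) (add_le_add_right ?_ _)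
          apply sum_smul_bound L M hL hM _ (2 * K' * ‖Tbar f h L M θ w H l‖)
          intro j
          calc ‖f (Tbar f h L M θ w H l) (θ l j) + h (Tbar f h L M θ w H l) (w l j)‖
              ≤ ‖f (Tbar f h L M θ w H l) (θ l j)‖ + ‖h (Tbar f h L M θ w H l) (w l j)‖ :=
                norm_add_le _ _
            _ ≤ K' * ‖Tbar f h L M θ w H l‖ + K' * ‖Tbar f h L M θ w H l‖ :=
                add_le_add (hfb l hl j _) (hhb l hl j _)
            _ = 2 * K' * ‖Tbar f h L M θ w H l‖ := by ring
        have he := Real.add_one_le_exp (K' / L)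
        have h2 : ‖Tbar f h L M θ w H l‖ + (2 * K' * ‖Tbar f h L M θ w H l‖) / (2 * L)
            ≤ Real.sqrt (N + 1) * B * Real.exp (K' * l / L) * Real.exp (K' / L) := by
          have heq : ‖Tbar f h L M θ w H l‖ + (2 * K' * ‖Tbar f h L M θ w H l‖) / (2 * L)
              = ‖Tbar f h L M θ w H l‖ * (1 + K' / L) := by
            field_simp
          rw [heq]
          calc ‖Tbar f h L M θ w H l‖ * (1 + K' / L)
              ≤ Real.sqrt (N + 1) * B * Real.exp (K' * l / L) * (1 + K' / L) :=
                mul_le_mul_of_nonneg_right ih2 (by positivity)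
            _ ≤ Real.sqrt (N + 1) * B * Real.exp (K' * l / L) * Real.exp (K' / L) :=
                mul_le_mul_of_nonneg_left (by linarith) hexp.le
        refine le_trans h1 (le_trans h2 (le_of_eq ?_))
        have harg : K' * ((l : ℝ) + 1) / L = K' * l / L + K' / L := by
          field_simp
        push_cast
        rw [harg, Real.exp_add]
        ring
  -- uniform bound Bm, including the half-step points
  have hKl : ∀ l ≤ L, Real.sqrt (N + 1) * B * Real.exp (K' * l / L) ≤ Bm := by
    intro l hl
    rw [hBmdef]
    apply mul_le_mul_of_nonneg_left _ (by positivity)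
    apply Real.exp_le_exp.2
    have hlL : (l:ℝ) ≤ L := by exact_mod_cast hl
    rw [div_le_iff₀ hLpos]
    nlinarith
  have hTd : ∀ l ≤ L, ‖Tdis f h L M θ w H l‖ ≤ Bm :=
    fun l hl => le_trans (grow l hl).1 (hKl l hl)
  have hTb : ∀ l ≤ L, ‖Tbar f h L M θ w H l‖ ≤ Bm :=
    fun l hl => le_trans (grow l hl).2 (hKl l hl)
  have hTd' : ∀ l < L, ‖Tdis f h L M θ w H l + (2 * (L : ℝ) * (M : ℝ))⁻¹ • ∑ j : Fin M,
      f (Tdis f h L M θ w H l) (θ l j)‖ ≤ Bm := by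
    intro l hl
    have s1 := step (Tdis f h L M θ w H l) (fun j => f (Tdis f h L M θ w H l) (θ l j))
      (Real.sqrt (N + 1) * B * Real.exp (K' * l / L)) (by positivity) (grow l hl.le).1
      (fun j => hfb l hl j _)
    refine le_trans s1 ?_
    rw [hBmdef, mul_assoc, ← Real.exp_add]
    apply mul_le_mul_of_nonneg_left _ (by positivity)
    apply Real.exp_le_exp.2
    have hlL : (l:ℝ) ≤ L := by exact_mod_cast hl.le
    have e1 : K' * l / L ≤ K' := by
      rw [div_le_iff₀ hLpos]; nlinarith
    have e2 : K' / (2 * L) ≤ K' := by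
      rw [div_le_iff₀ (by positivity : (0:ℝ) < 2 * L)]; nlinarith
    linarith
  -- error recursion
  have err : ∀ l ≤ L, ‖Tdis f h L M θ w H l - Tbar f h L M θ w H l‖ ≤
      d * l * Real.exp (Lip * l / L) / L ^ 2 := by
    intro l
    induction l with
    | zero => intro _; simp [Tdis, Tbar]
    | succ l ih =>
      intro hl1
      have hl : l < L := hl1
      have ihe := ih hl.le
      have hid : Tdis f h L M θ w H (l + 1) - Tbar f h L M θ w H (l + 1) =
          (Tdis f h L M θ w H l - Tbar f h L M θ w H l)
          + ((2 * (L : ℝ) * (M : ℝ))⁻¹ • ∑ j : Fin M,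
              (f (Tdis f h L M θ w H l) (θ l j) - f (Tbar f h L M θ w H l) (θ l j)))
          + ((2 * (L : ℝ) * (M : ℝ))⁻¹ • ∑ j : Fin M,
              (h (Tdis f h L M θ w H l + (2 * (L : ℝ) * (M : ℝ))⁻¹ • ∑ j : Fin M,
                  f (Tdis f h L M θ w H l) (θ l j)) (w l j)
               - h (Tbar f h L M θ w H l) (w l j))) := by
        simp only [Tdis, Tbar]
        rw [Finset.sum_sub_distrib, Finset.sum_sub_distrib, Finset.sum_add_distrib]
        simp only [smul_sub, smul_add]
        abel
      set e : ℝ := ‖Tdis f h L M θ w H l - Tbar f h L M θ w H l‖ with hedef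
      have he0 : 0 ≤ e := norm_nonneg _
      have b2 : ‖(2 * (L : ℝ) * (M : ℝ))⁻¹ • ∑ j : Fin M,
          (f (Tdis f h L M θ w H l) (θ l j) - f (Tbar f h L M θ w H l) (θ l j))‖
          ≤ (Lip * e) / (2 * L) := by
        apply sum_smul_bound L M hL hM _ (Lip * e)
        intro j
        exact hlipf l hl j _ _ (hTd l hl.le) (hTb l hl.le)
      have b3 : ‖(2 * (L : ℝ) * (M : ℝ))⁻¹ • ∑ j : Fin M,
          (h (Tdis f h L M θ w H l + (2 * (L : ℝ) * (M : ℝ))⁻¹ • ∑ j : Fin M,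
              f (Tdis f h L M θ w H l) (θ l j)) (w l j)
           - h (Tbar f h L M θ w H l) (w l j))‖
          ≤ (Lip * (K' * Bm / (2 * L) + e)) / (2 * L) := by
        apply sum_smul_bound L M hL hM _ (Lip * (K' * Bm / (2 * L) + e))
        intro j
        refine le_trans (hliph l hl j _ _ (hTd' l hl) (hTb l hl.le)) ?_
        apply mul_le_mul_of_nonneg_left _ hLip
        have hdiff : Tdis f h L M θ w H l + (2 * (L : ℝ) * (M : ℝ))⁻¹ • (∑ j : Fin M,
            f (Tdis f h L M θ w H l) (θ l j)) - Tbar f h L M θ w H l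
            = ((2 * (L : ℝ) * (M : ℝ))⁻¹ • ∑ j : Fin M, f (Tdis f h L M θ w H l) (θ l j))
              + (Tdis f h L M θ w H l - Tbar f h L M θ w H l) := by abel
        rw [hdiff]
        refine le_trans (norm_add_le _ _) (add_le_add ?_ le_rfl)
        refine le_trans (sum_smul_bound L M hL hM _ (K' * ‖Tdis f h L M θ w H l‖)
          (fun j => hfb l hl j _)) ?_
        gcongr
        exact hTd l hl.le
      rw [hid]
      have btot : ‖(Tdis f h L M θ w H l - Tbar f h L M θ w H l)
          + ((2 * (L : ℝ) * (M : ℝ))⁻¹ • ∑ j : Fin M,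
              (f (Tdis f h L M θ w H l) (θ l j) - f (Tbar f h L M θ w H l) (θ l j)))
          + ((2 * (L : ℝ) * (M : ℝ))⁻¹ • ∑ j : Fin M,
              (h (Tdis f h L M θ w H l + (2 * (L : ℝ) * (M : ℝ))⁻¹ • ∑ j : Fin M,
                  f (Tdis f h L M θ w H l) (θ l j)) (w l j)
               - h (Tbar f h L M θ w H l) (w l j)))‖
          ≤ e + (Lip * e) / (2 * L) + (Lip * (K' * Bm / (2 * L) + e)) / (2 * L) :=
        le_trans (norm_add_le _ _)
          (add_le_add (le_trans (norm_add_le _ _) (add_le_add le_rfl b2)) b3)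
      refine le_trans btot ?_
      have hsplit : Real.exp (Lip * ((l : ℝ) + 1) / L)
          = Real.exp (Lip * l / L) * Real.exp (Lip / L) := by
        rw [← Real.exp_add]
        congr 1
        field_simp
      push_cast
      rw [hsplit]
      have hv1 : (1:ℝ) ≤ Real.exp (Lip / L) := Real.one_le_exp (by positivity)
      have hu1 : (1:ℝ) ≤ Real.exp (Lip * l / L) := Real.one_le_exp (by positivity)
      have hv0 : (0:ℝ) ≤ Real.exp (Lip / L) := by positivity
      have he' := Real.add_one_le_exp (Lip / L)
      have lhs_eq : e + (Lip * e) / (2 * L) + (Lip * (K' * Bm / (2 * L) + e)) / (2 * L)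
          = e * (1 + Lip / L) + d / L ^ 2 := by
        rw [hddef]
        field_simp
        ring
      rw [lhs_eq]
      have step1 : e * (1 + Lip / L) ≤ e * Real.exp (Lip / L) :=
        mul_le_mul_of_nonneg_left (by linarith) he0
      have step2 : e * Real.exp (Lip / L)
          ≤ (d * l * Real.exp (Lip * l / L) / L ^ 2) * Real.exp (Lip / L) :=
        mul_le_mul_of_nonneg_right ihe hv0
      have huv : (1:ℝ) ≤ Real.exp (Lip * l / L) * Real.exp (Lip / L) := by nlinarith
      have step3 : d / L ^ 2 ≤ d * (Real.exp (Lip * l / L) * Real.exp (Lip / L)) / L ^ 2 := by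
        apply div_le_div_of_nonneg_right _ (by positivity)
        nlinarith
      calc e * (1 + Lip / L) + d / L ^ 2
          ≤ (d * l * Real.exp (Lip * l / L) / L ^ 2) * Real.exp (Lip / L)
            + d * (Real.exp (Lip * l / L) * Real.exp (Lip / L)) / L ^ 2 :=
            add_le_add (le_trans step1 step2) step3
        _ = d * ((l:ℝ) + 1) * (Real.exp (Lip * l / L) * Real.exp (Lip / L)) / L ^ 2 := by
            ring
  -- conclusion
  intro l hl
  refine le_trans (colNorm_le_norm _) (le_trans (err l hl) ?_)
  have hlL : (l:ℝ) ≤ L := by exact_mod_cast hl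
  have hE : Real.exp (Lip * l / L) ≤ Real.exp Lip := by
    apply Real.exp_le_exp.2
    rw [div_le_iff₀ hLpos]
    nlinarith
  rw [div_le_div_iff₀ (by positivity : (0:ℝ) < (L:ℝ) ^ 2) hLpos]
  have hA : (0:ℝ) ≤ d * l * (Real.exp Lip - Real.exp (Lip * l / L)) :=
    mul_nonneg (mul_nonneg hd (Nat.cast_nonneg l)) (sub_nonneg.2 hE)
  have hB' : (0:ℝ) ≤ d * Real.exp Lip * ((L:ℝ) - l) :=
    mul_nonneg (mul_nonneg hd (Real.exp_pos Lip).le) (sub_nonneg.2 hlL)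
  have h1 : d * l * Real.exp (Lip * l / L) ≤ d * L * Real.exp Lip := by nlinarith
  calc d * (l:ℝ) * Real.exp (Lip * l / L) * L ≤ (d * L * Real.exp Lip) * L :=
        mul_le_mul_of_nonneg_right h1 hLpos.le
    _ ≤ (d * Real.exp Lip + 1) * (L:ℝ) ^ 2 := by nlinarith [sq_nonneg (L:ℝ)]
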